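/- Let s ∈ (1,2), set γ := √(4(2−s)² + (s²−1)²) and ξ* := √((s² + 1 + γ)/2), and define f(ξ) := ξ² + (2−s)²/(ξ² − s²) for ξ > s. Then: (i) s < ξ* < √(2s); (ii) f(ξ*) = s² + γ; and (iii) for every ξ ∈ [ξ*, √(2s)] with ξ ≠ ξ*, one has f(ξ) < f(ξ*). In particular, f attains its unique maximum on [ξ*, √(2s)] at ξ*. -/

import Mathlib

set_option maxHeartbeats 4000000


/-- the technical planar lemma on the function
`f(ξ) = ξ² + (2−s)²/(ξ² − s²)` and its unique maximum at `ξ*`. -/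
theorem stmt16 (s : ℝ) (hs1 : 1 < s) (hs2 : s < 2)
    (γ ξstar : ℝ)
    (hγ : γ = Real.sqrt (4 * (2 - s) ^ 2 + (s ^ 2 - 1) ^ 2))
    (hξ : ξstar = Real.sqrt ((s ^ 2 + 1 + γ) / 2))
    (f : ℝ → ℝ) (hf : ∀ ξ, f ξ = ξ ^ 2 + (2 - s) ^ 2 / (ξ ^ 2 - s ^ 2)) :
    (s < ξstar ∧ ξstar < Real.sqrt (2 * s)) ∧
    f ξstar = s ^ 2 + γ ∧
    (∀ ξ ∈ Set.Icc ξstar (Real.sqrt (2 * s)), ξ ≠ ξstar → f ξ < f ξstar) := by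
  have hs0 : (0:ℝ) < s := by linarith
  have hγnn : 0 ≤ γ := hγ ▸ Real.sqrt_nonneg _
  have hγ2 : γ ^ 2 = 4 * (2 - s) ^ 2 + (s ^ 2 - 1) ^ 2 := by
    rw [hγ]; exact Real.sq_sqrt (by positivity)
  have hγgt : s ^ 2 - 1 < γ := by
    nlinarith [sq_nonneg (2 - s), sq_nonneg (γ + s ^ 2 - 1)]
  have hξnn : 0 ≤ ξstar := hξ ▸ Real.sqrt_nonneg _
  have ht : ξstar ^ 2 = (s ^ 2 + 1 + γ) / 2 := by
    rw [hξ]; exact Real.sq_sqrt (by nlinarith)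
  have h1 : s < ξstar := by nlinarith
  have hγlt : γ < 4 * s - s ^ 2 - 1 := by
    have hR : (0:ℝ) < 4 * s - s ^ 2 - 1 := by nlinarith
    have hsq : γ ^ 2 < (4 * s - s ^ 2 - 1) ^ 2 := by
      nlinarith [mul_pos (mul_pos (show (0:ℝ) < s ^ 2 - 1 by nlinarith)
        (show (0:ℝ) < 2 - s by linarith)) (show (0:ℝ) < 8 by norm_num)]
    nlinarith
  have h2s : ξstar ^ 2 < 2 * s := by rw [ht]; linarith
  have h2 : ξstar < Real.sqrt (2 * s) := (Real.lt_sqrt hξnn).mpr h2s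
  have hdtpos : 0 < ξstar ^ 2 - s ^ 2 := by rw [ht]; linarith
  have hfstar : f ξstar = s ^ 2 + γ := by
    rw [hf]
    have hd : (2 - s) ^ 2 / (ξstar ^ 2 - s ^ 2) = (γ + s ^ 2 - 1) / 2 := by
      rw [div_eq_div_iff (by linarith) (by norm_num), ht]
      linear_combination (-1/2 : ℝ) * hγ2
    rw [hd, ht]; ring
  refine ⟨⟨h1, h2⟩, hfstar, ?_⟩
  intro ξ hmem hne
  obtain ⟨hl, hr⟩ := hmem
  have hξgt : ξstar < ξ := lt_of_le_of_ne hl (Ne.symm hne)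
  have hu2 : ξ ^ 2 ≤ 2 * s := by
    have hξ0 : 0 ≤ ξ := le_trans hξnn hl
    have := (Real.le_sqrt hξ0 (by linarith)).mp hr
    linarith
  have hup : ξstar ^ 2 < ξ ^ 2 := by nlinarith
  have hdu : 0 < ξ ^ 2 - s ^ 2 := by linarith
  have hγmax : s * (γ - s ^ 2 + 1) < 2 * (2 - s) := by
    have hR : (0:ℝ) < 2 * (2 - s) + s * (s ^ 2 - 1) := by nlinarith
    have hsq : (s * γ) ^ 2 < (2 * (2 - s) + s * (s ^ 2 - 1)) ^ 2 := by
      nlinarith [mul_pos (mul_pos (show (0:ℝ) < 2 - s by linarith)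
        (pow_pos (show (0:ℝ) < s - 1 by linarith) 2)) (show (0:ℝ) < s + 1 by linarith)]
    nlinarith [mul_nonneg hs0.le hγnn]
  have key : (ξ ^ 2 - s ^ 2) * (ξstar ^ 2 - s ^ 2) < (2 - s) ^ 2 := by
    have hts : ξstar ^ 2 - s ^ 2 = (γ - s ^ 2 + 1) / 2 := by rw [ht]; ring
    calc (ξ ^ 2 - s ^ 2) * (ξstar ^ 2 - s ^ 2)
        ≤ (2 * s - s ^ 2) * (ξstar ^ 2 - s ^ 2) := by
          apply mul_le_mul_of_nonneg_right (by linarith) hdtpos.le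
      _ < (2 - s) ^ 2 := by
          rw [hts]
          nlinarith [mul_lt_mul_of_pos_left hγmax (show (0:ℝ) < 2 - s by linarith)]
  have hdiff : f ξ - f ξstar =
      (ξ ^ 2 - ξstar ^ 2) * ((ξ ^ 2 - s ^ 2) * (ξstar ^ 2 - s ^ 2) - (2 - s) ^ 2) /
        ((ξ ^ 2 - s ^ 2) * (ξstar ^ 2 - s ^ 2)) := by
    rw [hf, hf]; field_simp; ring
  have hneg : f ξ - f ξstar < 0 := by
    rw [hdiff]
    apply div_neg_of_neg_of_pos
    · exact mul_neg_of_pos_of_neg (by linarith) (by linarith)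
    · exact mul_pos hdu hdtpos
  linarith
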